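/- If (Y_i)_{i∈ℤ} is stationary and ergodic with E[Y_1] < s, then the queue length recursion Q_{n+1} = (Q_n - s + Y_{n+1})^+ started from any a.s. finite Q_0 ≥ 0 couples with a stationary ergodic sequence (Q'_n) satisfying Q'_0 = sup_{n≥0} V_n, where V_n = Σ_{i=0}^{n-1} Y_{-i} - ns; in particular sup_{n≥0} V_n < ∞ a.s. -/

import Mathlib

open MeasureTheory Filter Set

/-- The left shift on two-sided real sequences. -/
def shiftZ : (ℤ → ℝ) → (ℤ → ℝ) := fun z i => z (i + 1)

namespace LoynesAux

/-- The right shift, inverse of `shiftZ`. -/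
def sigmaZ : (ℤ → ℝ) → (ℤ → ℝ) := fun z i => z (i - 1)

lemma shiftZ_measurable : Measurable shiftZ :=
  measurable_pi_lambda _ fun i => measurable_pi_apply (i + 1)

lemma sigmaZ_measurable : Measurable sigmaZ :=
  measurable_pi_lambda _ fun i => measurable_pi_apply (i - 1)

lemma sigmaZ_shiftZ (z : ℤ → ℝ) : sigmaZ (shiftZ z) = z :=
  funext fun i => by simp [sigmaZ, shiftZ]

lemma shiftZ_sigmaZ (z : ℤ → ℝ) : shiftZ (sigmaZ z) = z :=
  funext fun i => by simp [sigmaZ, shiftZ]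

/-- `shiftZ` as a measurable equivalence. -/
def shiftEquiv : (ℤ → ℝ) ≃ᵐ (ℤ → ℝ) where
  toFun := shiftZ
  invFun := sigmaZ
  left_inv := sigmaZ_shiftZ
  right_inv := shiftZ_sigmaZ
  measurable_toFun := shiftZ_measurable
  measurable_invFun := sigmaZ_measurable

lemma iterate_shiftZ (k : ℕ) (z : ℤ → ℝ) (i : ℤ) : shiftZ^[k] z i = z (i + k) := by
  induction k generalizing i with
  | zero => simp
  | succ k ih =>
    rw [Function.iterate_succ_apply']
    show (shiftZ^[k] z) (i + 1) = z (i + (k + 1 : ℕ))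
    rw [ih]
    congr 1
    push_cast
    ring

lemma iterate_sigmaZ (k : ℕ) (z : ℤ → ℝ) (i : ℤ) : sigmaZ^[k] z i = z (i - k) := by
  induction k generalizing i with
  | zero => simp
  | succ k ih =>
    rw [Function.iterate_succ_apply']
    show (sigmaZ^[k] z) (i - 1) = z (i - (k + 1 : ℕ))
    rw [ih]
    congr 1
    push_cast
    ring

end LoynesAux

namespace LoynesAux

variable {α : Type*} [MeasurableSpace α] {μ : Measure α} {T : α → α} {f : α → ℝ}

/-- Recursive maximal function: `MH T f N z = max_{1 ≤ n ≤ N+1} birkhoffSum T f n z`. -/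
noncomputable def MH (T : α → α) (f : α → ℝ) : ℕ → α → ℝ
  | 0 => f
  | (N + 1) => fun z => f z + max (MH T f N (T z)) 0

lemma MH_measurable (hT : Measurable T) (hf : Measurable f) (N : ℕ) :
    Measurable (MH T f N) := by
  induction N with
  | zero => exact hf
  | succ N ih => exact hf.add ((ih.comp hT).max measurable_const)

lemma MH_integrable (hT : MeasurePreserving T μ μ) (hTm : Measurable T) (hf : Measurable f)
    (hfi : Integrable f μ) (N : ℕ) : Integrable (MH T f N) μ := by
  induction N with
  | zero => exact hfi
  | succ N ih =>
    have h1 : Integrable (fun z => max (MH T f N z) 0) μ := ih.pos_part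
    have h2 : Integrable ((fun z => max (MH T f N z) 0) ∘ T) μ :=
      (hT.integrable_comp h1.aestronglyMeasurable).mpr h1
    exact hfi.add h2

lemma MH_mono (N : ℕ) (z : α) : MH T f N z ≤ MH T f (N + 1) z := by
  induction N generalizing z with
  | zero => simpa [MH] using le_add_of_nonneg_right (le_max_right _ _)
  | succ N ih =>
    show f z + max (MH T f N (T z)) 0 ≤ f z + max (MH T f (N + 1) (T z)) 0
    exact add_le_add_right (max_le_max (ih (T z)) le_rfl) _

lemma birkhoffSum_le_MH (N : ℕ) (z : α) : birkhoffSum T f (N + 1) z ≤ MH T f N z := by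
  induction N generalizing z with
  | zero => simp [MH, birkhoffSum_one]
  | succ N ih =>
    rw [birkhoffSum_succ']
    exact add_le_add_right ((ih (T z)).trans (le_max_left _ _)) _

lemma MH_sub_le (N : ℕ) (z : α) : MH T f N z - max (MH T f N (T z)) 0 ≤ f z := by
  cases N with
  | zero => simpa [MH] using sub_le_self (f z) (le_max_right _ _)
  | succ N =>
    show f z + max (MH T f N (T z)) 0 - max (MH T f (N + 1) (T z)) 0 ≤ f z
    have := max_le_max (MH_mono (T := T) (f := f) N (T z)) (le_refl (0 : ℝ))
    linarith

/-- Hopf's maximal ergodic theorem. -/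
lemma hopf (hT : MeasurePreserving T μ μ) (hTm : Measurable T) (hf : Measurable f)
    (hfi : Integrable f μ) (N : ℕ) :
    0 ≤ ∫ z in {z | 0 < MH T f N z}, f z ∂μ := by
  set E : Set α := {z | 0 < MH T f N z} with hE
  have hEm : MeasurableSet E := measurableSet_lt measurable_const (MH_measurable hTm hf N)
  set g : α → ℝ := fun z => max (MH T f N z) 0 with hg
  have hgm : Measurable g := (MH_measurable hTm hf N).max measurable_const
  have hgi : Integrable g μ := (MH_integrable hT hTm hf hfi N).pos_part
  have hgTi : Integrable (fun z => g (T z)) μ :=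
    (hT.integrable_comp hgi.aestronglyMeasurable).mpr hgi
  -- ∫_E (g - g∘T) ≤ ∫_E f
  have key : ∫ z in E, (g z - g (T z)) ∂μ ≤ ∫ z in E, f z ∂μ := by
    refine setIntegral_mono_on (hgi.sub hgTi).integrableOn hfi.integrableOn hEm ?_
    intro z hz
    have h1 : g z = MH T f N z := max_eq_left (le_of_lt hz)
    rw [h1]
    exact MH_sub_le N z
  have split : ∫ z in E, (g z - g (T z)) ∂μ = ∫ z in E, g z ∂μ - ∫ z in E, g (T z) ∂μ :=
    integral_sub hgi.integrableOn hgTi.integrableOn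
  -- ∫_E g = ∫ g
  have hEg : ∫ z in E, g z ∂μ = ∫ z, g z ∂μ := by
    have hcompl : ∫ z in Eᶜ, g z ∂μ = 0 := by
      rw [setIntegral_congr_fun hEm.compl (fun z hz => ?_), integral_zero]
      have : ¬ 0 < MH T f N z := hz
      exact max_eq_right (not_lt.mp this)
    have := integral_add_compl hEm hgi
    linarith
  -- ∫_E g∘T ≤ ∫ g∘T = ∫ g
  have hgT_eq : ∫ z, g (T z) ∂μ = ∫ z, g z ∂μ := by
    have h := integral_map (f := g) hTm.aemeasurable
      (by rw [hT.map_eq]; exact hgm.aestronglyMeasurable)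
    rw [← h, hT.map_eq]
  have hle : ∫ z in E, g (T z) ∂μ ≤ ∫ z, g (T z) ∂μ :=
    setIntegral_le_integral hgTi (Eventually.of_forall fun z => le_max_right _ _)
  linarith

end LoynesAux

namespace LoynesAux

variable {α : Type*} [MeasurableSpace α] {μ : Measure α} {T : α → α} {f : α → ℝ}

lemma birkhoffSum_measurable (hT : Measurable T) (hf : Measurable f) (n : ℕ) :
    Measurable (fun z => birkhoffSum T f n z) :=
  Finset.measurable_sum _ fun k _ => hf.comp (hT.iterate k)

/-- integral over the union of the sets `{0 < MH N}` is nonnegative -/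
lemma hopf_iUnion (hT : MeasurePreserving T μ μ) (hTm : Measurable T) (hf : Measurable f)
    (hfi : Integrable f μ) :
    0 ≤ ∫ z in ⋃ N, {z | 0 < MH T f N z}, f z ∂μ := by
  have hEm : ∀ N, MeasurableSet {z | 0 < MH T f N z} := fun N =>
    measurableSet_lt measurable_const (MH_measurable hTm hf N)
  have hmono : Monotone (fun N => {z | 0 < MH T f N z}) := by
    intro N M hNM
    induction M with
    | zero => simp_all
    | succ M ih =>
      rcases Nat.lt_or_ge N (M + 1) with h | h
      · exact (ih (Nat.lt_succ_iff.mp h)).trans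
          (fun z hz => lt_of_lt_of_le hz (MH_mono M z))
      · have : N = M + 1 := le_antisymm hNM h
        subst this; exact le_rfl
  have htend := tendsto_setIntegral_of_monotone (μ := μ) (f := f) hEm hmono
    hfi.integrableOn
  exact ge_of_tendsto' htend fun N => hopf hT hTm hf hfi N

/-- Corollary A: birkhoff sums are a.e. bounded above if the mean is negative. -/
lemma ae_bddAbove_birkhoffSum [IsProbabilityMeasure μ] (hT : Ergodic T μ)
    (hf : Measurable f) (hfi : Integrable f μ) (hneg : ∫ z, f z ∂μ < 0) :
    ∀ᵐ z ∂μ, BddAbove (Set.range fun n => birkhoffSum T f n z) := by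
  have hTm : Measurable T := hT.toMeasurePreserving.measurable
  have hBm : ∀ n, Measurable (fun z => birkhoffSum T f n z) :=
    birkhoffSum_measurable hTm hf
  set G : Set α := {z | BddAbove (Set.range fun n => birkhoffSum T f n z)} with hG
  have hGm : MeasurableSet G := measurableSet_bddAbove_range hBm
  -- invariance
  have hinv : T ⁻¹' Gᶜ = Gᶜ := by
    have : T ⁻¹' G = G := by
      ext z
      simp only [Set.mem_preimage, hG, Set.mem_setOf_eq]
      constructor
      · rintro ⟨c, hc⟩
        refine ⟨max (f z + c) 0, ?_⟩
        rintro x ⟨n, rfl⟩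
        cases n with
        | zero => simp [birkhoffSum_zero]
        | succ n =>
          show birkhoffSum T f (n + 1) z ≤ max (f z + c) 0
          rw [birkhoffSum_succ']
          exact le_max_of_le_left (add_le_add_right (hc (Set.mem_range_self n)) _)
      · rintro ⟨c, hc⟩
        refine ⟨c - f z, ?_⟩
        rintro x ⟨n, rfl⟩
        have := hc (Set.mem_range_self (n + 1))
        rw [birkhoffSum_succ'] at this
        linarith
    rw [Set.preimage_compl, this]
  rcases hT.ae_empty_or_univ hGm.compl hinv with h | h
  · have : μ Gᶜ = 0 := by
      have := measure_congr h; simpa using this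
    rw [ae_iff]
    simpa [hG, Set.compl_setOf] using this
  · exfalso
    -- a.e. unbounded, so a.e. in the union of the E_N
    have hsub : Gᶜ ⊆ ⋃ N, {z | 0 < MH T f N z} := by
      intro z hz
      have : ¬ BddAbove (Set.range fun n => birkhoffSum T f n z) := hz
      rcases not_bddAbove_iff.mp this 0 with ⟨y, ⟨n, rfl⟩, hy⟩
      cases n with
      | zero => simp [birkhoffSum_zero] at hy
      | succ m =>
        exact Set.mem_iUnion.mpr ⟨m, lt_of_lt_of_le hy (birkhoffSum_le_MH m z)⟩
    have hU : μ (⋃ N, {z | 0 < MH T f N z}) = 1 := by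
      have h1 : μ Gᶜ = 1 := by
        have := measure_congr h; simpa using this
      refine le_antisymm prob_le_one (h1 ▸ measure_mono hsub)
    have hUm : MeasurableSet (⋃ N, {z | 0 < MH T f N z}) :=
      MeasurableSet.iUnion fun N => measurableSet_lt measurable_const (MH_measurable hTm hf N)
    have hcompl0 : μ (⋃ N, {z | 0 < MH T f N z})ᶜ = 0 := by
      rw [measure_compl hUm (by simp), hU]; simp
    have : ∫ z in ⋃ N, {z | 0 < MH T f N z}, f z ∂μ = ∫ z, f z ∂μ := by
      have h2 : ∫ z in (⋃ N, {z | 0 < MH T f N z})ᶜ, f z ∂μ = 0 := by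
        rw [Measure.restrict_eq_zero.mpr hcompl0]
        exact integral_zero_measure f
      have := integral_add_compl hUm hfi
      linarith
    have h0 := hopf_iUnion hT.toMeasurePreserving hTm hf hfi
    rw [this] at h0
    linarith

end LoynesAux

namespace LoynesAux

variable {α : Type*} [MeasurableSpace α] {μ : Measure α} {T : α → α} {f : α → ℝ}

/-- Corollary B: birkhoff sums are a.e. unbounded below if the mean is negative. -/
lemma ae_unbounded_below_birkhoffSum [IsProbabilityMeasure μ] (hT : Ergodic T μ)
    (hf : Measurable f) (hfi : Integrable f μ) (hneg : ∫ z, f z ∂μ < 0) :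
    ∀ᵐ z ∂μ, ∀ c : ℝ, ∃ n, birkhoffSum T f n z < c := by
  set ε : ℝ := -(∫ z, f z ∂μ) / 2 with hε
  have hε0 : 0 < ε := by rw [hε]; linarith
  set g : α → ℝ := fun z => f z + ε with hg
  have hgm : Measurable g := hf.add measurable_const
  have hgi : Integrable g μ := hfi.add (integrable_const ε)
  have hgneg : ∫ z, g z ∂μ < 0 := by
    rw [hg]
    rw [integral_add hfi (integrable_const ε), integral_const]
    simp only [measure_univ, ENNReal.toReal_one, probReal_univ, one_smul, smul_eq_mul, one_mul]
    rw [hε]; linarith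
  have hrel : ∀ n z, birkhoffSum T g n z = birkhoffSum T f n z + n * ε := by
    intro n z
    simp only [birkhoffSum, hg, Finset.sum_add_distrib, Finset.sum_const, nsmul_eq_mul,
      Finset.card_range]
  filter_upwards [ae_bddAbove_birkhoffSum hT hgm hgi hgneg] with z hb c
  rcases hb with ⟨b, hbub⟩
  by_contra hcon
  push_neg at hcon
  obtain ⟨n, hn⟩ := exists_nat_gt ((b - c) / ε)
  have h1 : birkhoffSum T g n z ≤ b := hbub (Set.mem_range_self n)
  have h2 : c ≤ birkhoffSum T f n z := hcon n
  rw [hrel n z] at h1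
  have : (b - c) / ε < n := hn
  rw [div_lt_iff₀ hε0] at this
  linarith

end LoynesAux


open LoynesAux

/-- Loynes' theorem for the queue length: if the arrivals `(Y_i)` (coordinate
process on the canonical space with ergodic shift-invariant probability `μ`)
are nonnegative with `E[Y 1] < s`, then the queue recursion
`Q_{n+1} = (Q_n - s + Y_{n+1})⁺` started from any a.s. finite `Q 0 ≥ 0`
couples with the stationary ergodic sequence `Q'_n = Q' ∘ shiftZ^[n]` where
`Q' = sup_{n ≥ 0} V_n`, `V_n = ∑_{i=0}^{n-1} Y_{-i} - n s`; in particular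
`sup_n V_n < ∞` a.s. -/
theorem stmt_6 (μ : Measure (ℤ → ℝ)) [IsProbabilityMeasure μ]
    (hshift : Ergodic shiftZ μ)
    (hnonneg : ∀ᵐ z ∂μ, ∀ i, 0 ≤ z i)
    (hint : Integrable (fun z : ℤ → ℝ => z 1) μ)
    (s : ℝ) (hs : 0 < s) (hmean : (∫ z : ℤ → ℝ, z 1 ∂μ) < s)
    (Q : ℕ → (ℤ → ℝ) → ℝ)
    (hQ0 : ∀ᵐ z ∂μ, 0 ≤ Q 0 z)
    (hQ : ∀ n z, Q (n + 1) z = max (Q n z - s + z ((n : ℤ) + 1)) 0)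
    (V : ℕ → (ℤ → ℝ) → ℝ)
    (hV : ∀ n z, V n z = (∑ i ∈ Finset.range n, z (-(i : ℤ))) - n * s) :
    ∃ Q' : (ℤ → ℝ) → ℝ, Measurable Q' ∧
      ∀ᵐ z ∂μ, BddAbove (Set.range fun n => V n z) ∧
        Q' z = (⨆ n, V n z) ∧
        ∃ τ : ℕ, ∀ n, τ < n → Q n z = Q' (shiftZ^[n] z) := by
  classical
  have hmp : MeasurePreserving shiftZ μ μ := hshift.toMeasurePreserving
  have hmpσ : MeasurePreserving sigmaZ μ μ := MeasurePreserving.symm shiftEquiv hmp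
  -- ergodicity of the inverse shift
  have hergσ : Ergodic sigmaZ μ := by
    refine ⟨hmpσ, ⟨fun st hm hinv => hshift.aeconst_set hm ?_⟩⟩
    calc shiftZ ⁻¹' st = shiftZ ⁻¹' (sigmaZ ⁻¹' st) := by rw [hinv]
      _ = (sigmaZ ∘ shiftZ) ⁻¹' st := by rw [Set.preimage_comp]
      _ = st := by ext x; simp [sigmaZ_shiftZ]
  set f0 : (ℤ → ℝ) → ℝ := fun z => z 0 - s with hf0def
  set f1 : (ℤ → ℝ) → ℝ := fun z => z 1 - s with hf1def
  have hm0 : Measurable f0 := (measurable_pi_apply 0).sub measurable_const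
  have hm1 : Measurable f1 := (measurable_pi_apply 1).sub measurable_const
  have hi1 : Integrable f1 μ := hint.sub (integrable_const s)
  have hcomp : (fun z : ℤ → ℝ => z 1) ∘ sigmaZ = fun z : ℤ → ℝ => z 0 :=
    funext fun z => by simp [sigmaZ]
  have hi00 : Integrable (fun z : ℤ → ℝ => z 0) μ := by
    rw [← hcomp]
    exact (hmpσ.integrable_comp hint.aestronglyMeasurable).mpr hint
  have hi0 : Integrable f0 μ := hi00.sub (integrable_const s)
  have hint0 : ∫ z : ℤ → ℝ, z 0 ∂μ = ∫ z : ℤ → ℝ, z 1 ∂μ := by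
    have h1 : ∫ z : ℤ → ℝ, ((fun z : ℤ → ℝ => z 1) ∘ sigmaZ) z ∂μ
        = ∫ z : ℤ → ℝ, z 1 ∂(Measure.map sigmaZ μ) :=
      (integral_map sigmaZ_measurable.aemeasurable
        (by rw [hmpσ.map_eq]; exact hint.aestronglyMeasurable)).symm
    rw [hcomp] at h1
    rw [h1, hmpσ.map_eq]
  have hneg0 : ∫ z, f0 z ∂μ < 0 := by
    rw [hf0def]
    rw [integral_sub hi00 (integrable_const s), integral_const]
    simp only [measure_univ, ENNReal.toReal_one, probReal_univ, smul_eq_mul, one_mul]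
    rw [hint0]; linarith
  have hneg1 : ∫ z, f1 z ∂μ < 0 := by
    rw [hf1def]
    rw [integral_sub hint (integrable_const s), integral_const]
    simp only [measure_univ, ENNReal.toReal_one, probReal_univ, smul_eq_mul, one_mul]
    linarith
  have hA := ae_bddAbove_birkhoffSum hergσ hm0 hi0 hneg0
  have hB := ae_unbounded_below_birkhoffSum hshift hm1 hi1 hneg1
  -- identification of V with birkhoff sums of the inverse shift
  have hVeq : ∀ n (z : ℤ → ℝ), V n z = birkhoffSum sigmaZ f0 n z := by
    intro n z
    rw [hV n z]
    have hterm : ∀ k : ℕ, f0 (sigmaZ^[k] z) = z (-(k : ℤ)) - s := by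
      intro k
      rw [hf0def]
      simp only [iterate_sigmaZ]
      norm_num
    simp only [birkhoffSum]
    rw [Finset.sum_congr rfl (fun k _ => hterm k), Finset.sum_sub_distrib,
      Finset.sum_const, Finset.card_range, nsmul_eq_mul]
  refine ⟨fun w => ⨆ n, birkhoffSum sigmaZ f0 n w,
    Measurable.iSup (fun n => birkhoffSum_measurable sigmaZ_measurable hm0 n), ?_⟩
  filter_upwards [hnonneg, hQ0, hA, hB] with z hz0 hzQ0 hbdd hunb
  have hfun : (fun n => V n z) = fun n => birkhoffSum sigmaZ f0 n z :=
    funext fun n => hVeq n z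
  refine ⟨by rw [hfun]; exact hbdd, by show _ = ⨆ n, V n z; rw [hfun], ?_⟩
  -- notation
  set B : ℕ → (ℤ → ℝ) → ℝ := fun n w => birkhoffSum sigmaZ f0 n w with hBdef
  set P : (ℤ → ℝ) → ℝ := fun w => ⨆ n, B n w with hPdef
  set S : ℕ → ℝ := fun n => birkhoffSum shiftZ f1 n z with hSdef
  have hB0 : ∀ w, B 0 w = 0 := fun w => birkhoffSum_zero _ _ _
  -- step of B under the shift
  have hBstep : ∀ (w : ℤ → ℝ) (m : ℕ), B (m + 1) (shiftZ w) = w 1 - s + B m w := by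
    intro w m
    show birkhoffSum sigmaZ f0 (m + 1) (shiftZ w) = w 1 - s + birkhoffSum sigmaZ f0 m w
    rw [birkhoffSum_succ', sigmaZ_shiftZ]
    have hf : f0 (shiftZ w) = w 1 - s := by
      rw [hf0def]
      show w (0 + 1) - s = w 1 - s
      norm_num
    rw [hf]
  -- boundedness propagates forward
  have hbddstep : ∀ w : ℤ → ℝ, BddAbove (Set.range fun m => B m w) →
      BddAbove (Set.range fun m => B m (shiftZ w)) := by
    rintro w ⟨c, hc⟩
    refine ⟨max (w 1 - s + c) 0, ?_⟩
    rintro x ⟨m, rfl⟩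
    cases m with
    | zero => simp [hB0]
    | succ m =>
      show B (m + 1) (shiftZ w) ≤ max (w 1 - s + c) 0
      rw [hBstep]
      exact le_max_of_le_left (add_le_add_right (hc (Set.mem_range_self m)) _)
  have hbdds : ∀ n, BddAbove (Set.range fun m => B m (shiftZ^[n] z)) := by
    intro n
    induction n with
    | zero => simpa using hbdd
    | succ n ih =>
      rw [Function.iterate_succ_apply']
      exact hbddstep _ ih
  have hPnn : ∀ w : ℤ → ℝ, BddAbove (Set.range fun m => B m w) → 0 ≤ P w := by
    intro w hw
    have := le_ciSup hw 0
    rwa [hB0] at this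
  -- recursion for P
  have hPrec : ∀ w : ℤ → ℝ, BddAbove (Set.range fun m => B m w) →
      P (shiftZ w) = max (w 1 - s + P w) 0 := by
    intro w hw
    apply le_antisymm
    · refine ciSup_le fun m => ?_
      cases m with
      | zero => rw [hB0]; exact le_max_right _ _
      | succ m =>
        rw [hBstep]
        exact le_max_of_le_left (add_le_add_right (le_ciSup hw m) _)
    · have hws := hbddstep w hw
      refine max_le ?_ ?_
      · have h1 : ∀ m, w 1 - s + B m w ≤ P (shiftZ w) := by
          intro m
          have := le_ciSup hws (m + 1)
          rwa [hBstep] at this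
        have h2 : P w ≤ P (shiftZ w) - (w 1 - s) := by
          refine ciSup_le fun m => ?_
          have := h1 m
          linarith
        linarith
      · have := le_ciSup hws 0
        rwa [hB0] at this
  -- recursion for S
  have hS0 : S 0 = 0 := birkhoffSum_zero _ _ _
  have hSrec : ∀ n : ℕ, S (n + 1) = S n + (z ((n : ℤ) + 1) - s) := by
    intro n
    show birkhoffSum shiftZ f1 (n + 1) z = birkhoffSum shiftZ f1 n z + (z ((n : ℤ) + 1) - s)
    rw [birkhoffSum_succ]
    congr 1
    rw [hf1def]
    show (shiftZ^[n] z) 1 - s = z ((n : ℤ) + 1) - s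
    rw [iterate_shiftZ]
    congr 2
    ring
  -- nonnegativity of Q
  have hQnn : ∀ n, 0 ≤ Q n z := by
    intro n
    cases n with
    | zero => exact hzQ0
    | succ n => rw [hQ]; exact le_max_right _ _
  -- the dominating sequence W
  set W : ℕ → ℝ := fun n =>
    Nat.rec (max (Q 0 z) (P z)) (fun n w => max (w - s + z ((n : ℤ) + 1)) 0) n with hWdef
  have hW0 : W 0 = max (Q 0 z) (P z) := rfl
  have hWs : ∀ n, W (n + 1) = max (W n - s + z ((n : ℤ) + 1)) 0 := fun n => rfl
  have hWnn : ∀ n, 0 ≤ W n := by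
    intro n
    cases n with
    | zero => rw [hW0]; exact le_trans (hQnn 0) (le_max_left _ _)
    | succ n => rw [hWs]; exact le_max_right _ _
  have hmaxmono : ∀ a b y : ℝ, a ≤ b → max (a - s + y) 0 ≤ max (b - s + y) 0 :=
    fun a b y h => max_le_max (by linarith) le_rfl
  have hQW : ∀ n, Q n z ≤ W n := by
    intro n
    induction n with
    | zero => rw [hW0]; exact le_max_left _ _
    | succ n ih => rw [hQ, hWs]; exact hmaxmono _ _ _ ih
  have hPW : ∀ n, P (shiftZ^[n] z) ≤ W n := by
    intro n
    induction n with
    | zero => simp only [Function.iterate_zero_apply]; rw [hW0]; exact le_max_right _ _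
    | succ n ih =>
      have hr : P (shiftZ^[n + 1] z) = max ((shiftZ^[n] z) 1 - s + P (shiftZ^[n] z)) 0 := by
        rw [Function.iterate_succ_apply']
        exact hPrec _ (hbdds n)
      rw [hr, hWs]
      have hcoord : (shiftZ^[n] z) 1 = z ((n : ℤ) + 1) := by
        rw [iterate_shiftZ]; congr 1; ring
      rw [hcoord]
      refine max_le ?_ (le_max_right _ _)
      have := ih
      have h2 : z ((n : ℤ) + 1) - s + P (shiftZ^[n] z) ≤ W n - s + z ((n : ℤ) + 1) := by
        linarith
      exact le_max_of_le_left h2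
  -- sup' + const
  have sup'_add : ∀ (t : Finset ℕ) (H : t.Nonempty) (g : ℕ → ℝ) (c : ℝ),
      t.sup' H (fun k => g k + c) = t.sup' H g + c := by
    intro t H g c
    apply le_antisymm
    · exact Finset.sup'_le _ _ fun k hk => add_le_add_left (Finset.le_sup' g hk) c
    · rw [← le_sub_iff_add_le]
      exact Finset.sup'_le _ _ fun k hk =>
        le_sub_iff_add_le.mpr (Finset.le_sup' (fun k => g k + c) hk)
  set U : ℕ → ℝ := fun m =>
    (Finset.range (m + 1)).sup' Finset.nonempty_range_add_one (fun k => S (m + 1) - S (k + 1))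
    with hUdef
  have hUnn : ∀ m, 0 ≤ U m := by
    intro m
    have : S (m + 1) - S (m + 1) ≤ U m :=
      Finset.le_sup' (fun k => S (m + 1) - S (k + 1)) (Finset.self_mem_range_succ m)
    simpa using this
  have hU0 : U 0 = 0 := by
    refine le_antisymm (Finset.sup'_le _ _ fun k hk => ?_) (hUnn 0)
    have hk0 : k = 0 := by
      have := Finset.mem_range.mp hk
      omega
    subst hk0
    simp
  have hUrec : ∀ m, U (m + 1) = max (U m + (S (m + 2) - S (m + 1))) 0 := by
    intro m
    apply le_antisymm
    · refine Finset.sup'_le _ _ fun k hk => ?_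
      rcases Nat.lt_succ_iff_lt_or_eq.mp (Finset.mem_range.mp hk) with h | h
      · have h1 : S (m + 1) - S (k + 1) ≤ U m :=
          Finset.le_sup' (fun k => S (m + 1) - S (k + 1)) (Finset.mem_range.mpr h)
        refine le_max_of_le_left ?_
        have : S (m + 2) - S (k + 1) = (S (m + 1) - S (k + 1)) + (S (m + 2) - S (m + 1)) := by
          ring
        rw [this]
        linarith
      · subst h
        have hidx : m + 1 + 1 = m + 2 := rfl
        show S (m + 2) - S (m + 1 + 1) ≤ _
        rw [hidx, sub_self]
        exact le_max_right _ _
    · refine max_le ?_ ?_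
      · have h2 : ∀ k ∈ Finset.range (m + 1),
            S (m + 1) - S (k + 1) ≤ U (m + 1) - (S (m + 2) - S (m + 1)) := by
          intro k hk
          have h3 : S (m + 2) - S (k + 1) ≤ U (m + 1) :=
            Finset.le_sup' (fun k => S (m + 2) - S (k + 1))
              (Finset.mem_range.mpr (Nat.lt_succ_of_lt (Finset.mem_range.mp hk)))
          linarith
        have h4 : U m ≤ U (m + 1) - (S (m + 2) - S (m + 1)) := Finset.sup'_le _ _ h2
        linarith
      · have h5 : S (m + 2) - S (m + 1 + 1) ≤ U (m + 1) :=
          Finset.le_sup' (fun k => S (m + 2) - S (k + 1)) (Finset.self_mem_range_succ (m + 1))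
        have hidx : m + 1 + 1 = m + 2 := rfl
        rw [hidx, sub_self] at h5
        exact h5
  -- the Loynes bound on W
  have hWU : ∀ m, W (m + 1) ≤ max (W 0 + S (m + 1)) (U m) := by
    intro m
    induction m with
    | zero =>
      rw [hWs 0, hU0]
      have hS1 : S 1 = z ((0 : ℤ) + 1) - s := by
        rw [hSrec 0, hS0]; norm_num
      refine max_le ?_ ?_
      · refine le_max_of_le_left ?_
        rw [hS1]
        push_cast
        linarith
      · exact le_max_of_le_right le_rfl
    | succ m ih =>
      rw [hWs (m + 1)]
      set y : ℝ := z (((m + 1 : ℕ) : ℤ) + 1) with hydef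
      have hSr : S (m + 2) = S (m + 1) + (y - s) := hSrec (m + 1)
      refine max_le ?_ ?_
      · have h1 : W (m + 1) - s + y ≤ max (W 0 + S (m + 1)) (U m) + (y - s) := by
          have := ih; linarith
        have h2 : max (W 0 + S (m + 1)) (U m) + (y - s)
            = max (W 0 + S (m + 1) + (y - s)) (U m + (y - s)) := by
          rw [max_add_add_right]
        have h3 : W 0 + S (m + 1) + (y - s) = W 0 + S (m + 2) := by
          rw [hSr]; ring
        have h4 : U m + (y - s) ≤ U (m + 1) := by
          rw [hUrec m, hSr]
          have : S (m + 1) + (y - s) - S (m + 1) = y - s := by ring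
          rw [this]
          exact le_max_left _ _
        calc W (m + 1) - s + y ≤ max (W 0 + S (m + 1) + (y - s)) (U m + (y - s)) := by
              rw [← h2]; exact h1
          _ ≤ max (W 0 + S (m + 2)) (U (m + 1)) := by
              refine max_le ?_ ?_
              · rw [h3]; exact le_max_left _ _
              · exact le_trans h4 (le_max_right _ _)
      · exact le_trans (hUnn (m + 1)) (le_max_right _ _)
  -- find the coupling time
  have hW0nn : 0 ≤ W 0 := hWnn 0
  obtain ⟨N, hN⟩ := hunb (-(W 0))
  have hNne : N ≠ 0 := by
    intro h
    rw [h] at hN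
    have : birkhoffSum shiftZ f1 0 z = 0 := birkhoffSum_zero _ _ _
    rw [this] at hN
    linarith
  obtain ⟨N', rfl⟩ := Nat.exists_eq_succ_of_ne_zero hNne
  have hNS : S (N' + 1) < -(W 0) := hN
  obtain ⟨k₀, hk₀mem, hk₀min⟩ := Finset.exists_min_image (Finset.range (N' + 1))
    (fun k => S (k + 1)) ⟨0, by simp⟩
  have hτN : S (k₀ + 1) ≤ S (N' + 1) := hk₀min N' (Finset.self_mem_range_succ N')
  have hSτ : W 0 + S (k₀ + 1) ≤ 0 := by linarith
  have hUneg : U k₀ ≤ 0 := by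
    refine Finset.sup'_le _ _ fun k hk => ?_
    have hkN : k ∈ Finset.range (N' + 1) := by
      rw [Finset.mem_range] at hk ⊢
      exact lt_of_lt_of_le hk (Nat.succ_le_succ (Finset.mem_range_succ_iff.mp hk₀mem))
    have := hk₀min k hkN
    simp only [sub_nonpos]
    exact this
  have hWτ : W (k₀ + 1) = 0 := by
    refine le_antisymm ?_ (hWnn (k₀ + 1))
    refine le_trans (hWU k₀) (max_le (by linarith) hUneg)
  have hQτ : Q (k₀ + 1) z = 0 :=
    le_antisymm (hWτ ▸ hQW (k₀ + 1)) (hQnn (k₀ + 1))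
  have hPτ : P (shiftZ^[k₀ + 1] z) = 0 :=
    le_antisymm (hWτ ▸ hPW (k₀ + 1)) (hPnn _ (hbdds (k₀ + 1)))
  refine ⟨k₀ + 1, fun n hn => ?_⟩
  have heq : ∀ m, k₀ + 1 ≤ m → Q m z = P (shiftZ^[m] z) := by
    intro m hm
    induction m, hm using Nat.le_induction with
    | base => rw [hQτ, hPτ]
    | succ m hm ih =>
      rw [hQ m z]
      have hr : P (shiftZ^[m + 1] z) = max ((shiftZ^[m] z) 1 - s + P (shiftZ^[m] z)) 0 := by
        rw [Function.iterate_succ_apply']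
        exact hPrec _ (hbdds m)
      have hcoord : (shiftZ^[m] z) 1 = z ((m : ℤ) + 1) := by
        rw [iterate_shiftZ]; congr 1; ring
      rw [hr, hcoord, ih]
      congr 1
      ring
  exact heq n (le_of_lt hn)
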